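/- Let n > 2 and let G and G' be rooted directed graphs on a common vertex set V of n vertices, both containing all self-loops, with Root(G) = R and Root(G') = R'. Let R'' be any subset of V with R'' ≠ R and R'' ≠ R'. Then there exists a finite sequence of directed graphs G = G_1, G_2, …, G_k = G' on V, all containing all self-loops, such that every G_i is rooted, Root(G_i) ≠ R'' for every i, and for every 1 ≤ i < k the graphs G_i and G_{i+1} differ in exactly one (non-self-loop) edge. -/

import Mathlib

/-- `R` is a root component of the directed graph `G`: a nonempty set of vertices
that is strongly connected (any two members are joined by a directed path in `G`)
and has no incoming edge from outside. -/
def IsRootComp {V : Type*} (G : V → V → Prop) (R : Set V) : Prop :=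
  R.Nonempty ∧ (∀ u ∈ R, ∀ v ∈ R, Relation.ReflTransGen G u v) ∧
    ∀ p q : V, G p q → q ∈ R → p ∈ R

/-- The edge set of a directed graph given as a relation. -/
def edgeSet {V : Type*} (G : V → V → Prop) : Set (V × V) :=
  {e : V × V | G e.1 e.2}

/-- Two directed graphs on the same vertex set differ in exactly one
(non-self-loop) edge: the symmetric difference of their edge sets is a
single edge `(u, v)` with `u ≠ v`. -/
def DifferOneEdge {V : Type*} (G G' : V → V → Prop) : Prop :=
  ∃ e : V × V, e.1 ≠ e.2 ∧ symmDiff (edgeSet G) (edgeSet G') = {e}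

namespace IncAux

variable {V : Type*}

/-- A chain of graphs from `A` to `B`, each satisfying `P`, consecutive ones
differing in one edge. -/
def Chain (P : (V → V → Prop) → Prop) (A B : V → V → Prop) : Prop :=
  ∃ (k : ℕ) (Gs : ℕ → V → V → Prop),
    Gs 0 = A ∧ Gs k = B ∧ (∀ i ≤ k, P (Gs i)) ∧
    ∀ i < k, DifferOneEdge (Gs i) (Gs (i + 1))

lemma chain_refl {P : (V → V → Prop) → Prop} {A : V → V → Prop} (h : P A) :
    Chain P A A :=
  ⟨0, fun _ => A, rfl, rfl, fun _ _ => h, fun i hi => absurd hi (by omega)⟩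

lemma differ_symm {A B : V → V → Prop} (h : DifferOneEdge A B) : DifferOneEdge B A := by
  obtain ⟨e, h1, h2⟩ := h
  exact ⟨e, h1, by rwa [symmDiff_comm]⟩

lemma chain_single {P : (V → V → Prop) → Prop} {A B : V → V → Prop}
    (hA : P A) (hB : P B) (hd : DifferOneEdge A B) : Chain P A B := by
  refine ⟨1, fun i => if i = 0 then A else B, by simp, by simp, ?_, ?_⟩
  · intro i hi
    interval_cases i
    · simpa using hA
    · simpa using hB
  · intro i hi
    interval_cases i
    simpa using hd

lemma chain_trans {P : (V → V → Prop) → Prop} {A B C : V → V → Prop}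
    (h1 : Chain P A B) (h2 : Chain P B C) : Chain P A C := by
  obtain ⟨k1, f, hf0, hfk, hfP, hfd⟩ := h1
  obtain ⟨k2, g, hg0, hgk, hgP, hgd⟩ := h2
  refine ⟨k1 + k2, fun i => if i < k1 then f i else g (i - k1), ?_, ?_, ?_, ?_⟩
  · by_cases h : 0 < k1
    · simp only [if_pos h]; exact hf0
    · have hk1 : k1 = 0 := by omega
      subst hk1
      simp only [lt_irrefl, if_neg (lt_irrefl 0), Nat.sub_zero]
      rw [hg0, ← hfk, hf0]
      simp
  · have h : ¬ (k1 + k2 < k1) := by omega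
    simp only [if_neg h]
    rw [show k1 + k2 - k1 = k2 by omega, hgk]
  · intro i hi
    by_cases h : i < k1
    · simp only [if_pos h]; exact hfP i (le_of_lt h)
    · simp only [if_neg h]; exact hgP (i - k1) (by omega)
  · intro i hi
    by_cases h : i + 1 < k1
    · have h' : i < k1 := by omega
      simp only [if_pos h, if_pos h']
      exact hfd i h'
    · by_cases h2 : i < k1
      · have he : i + 1 = k1 := by omega
        simp only [if_pos h2, if_neg h]
        rw [show i + 1 - k1 = 0 by omega, hg0, ← hfk, ← he]
        exact hfd i h2
      · simp only [if_neg h, if_neg h2]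
        rw [show i + 1 - k1 = (i - k1) + 1 by omega]
        exact hgd (i - k1) (by omega)

lemma chain_symm {P : (V → V → Prop) → Prop} {A B : V → V → Prop}
    (h : Chain P A B) : Chain P B A := by
  obtain ⟨k, f, h0, hk, hP, hd⟩ := h
  refine ⟨k, fun i => f (k - i), by simp [hk], by simp [h0], fun i hi => hP (k - i) (by omega),
    fun i hi => ?_⟩
  have h1 : k - i = (k - (i + 1)) + 1 := by omega
  show DifferOneEdge (f (k - i)) (f (k - (i + 1)))
  rw [h1]
  exact differ_symm (hd (k - (i + 1)) (by omega))

lemma differ_addEdge (A : V → V → Prop) (p q : V) (hne : p ≠ q) (h : ¬ A p q) :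
    DifferOneEdge A (fun a b => A a b ∨ (a = p ∧ b = q)) := by
  refine ⟨(p, q), hne, ?_⟩
  ext ⟨a, b⟩
  simp only [Set.mem_symmDiff, edgeSet, Set.mem_setOf_eq, Set.mem_singleton_iff,
    Prod.mk.injEq]
  constructor
  · rintro (⟨hA, hn⟩ | ⟨hA, hn⟩)
    · exact absurd (Or.inl hA) hn
    · rcases hA with hA | ⟨rfl, rfl⟩
      · exact absurd hA hn
      · exact ⟨rfl, rfl⟩
  · rintro ⟨rfl, rfl⟩
    exact Or.inr ⟨Or.inr ⟨rfl, rfl⟩, h⟩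

/-- Monotone interpolation: if `A ≤ B` and every graph between `A` and `B`
satisfies `P`, then there is a chain from `A` to `B`. -/
lemma chain_mono [Fintype V] (P : (V → V → Prop) → Prop) (B : V → V → Prop)
    (hself : ∀ p, B p p) :
    ∀ (n : ℕ) (A : V → V → Prop), (∀ p, A p p) → (∀ p q, A p q → B p q) →
      (∀ C : V → V → Prop, (∀ p q, A p q → C p q) → (∀ p q, C p q → B p q) → P C) →
      {e : V × V | B e.1 e.2 ∧ ¬ A e.1 e.2}.ncard = n → Chain P A B := by
  intro n
  induction n using Nat.strong_induction_on with
  | _ n ih =>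
    intro A hAself hAB hP hn
    by_cases hD : ∀ p q, B p q → A p q
    · have : A = B := by
        funext p q
        exact propext ⟨hAB p q, hD p q⟩
      rw [this]
      exact chain_refl (hP B (fun p q h => hAB p q h) (fun _ _ h => h))
    · push_neg at hD
      obtain ⟨p, q, hBpq, hApq⟩ := hD
      have hpq : p ≠ q := by
        rintro rfl
        exact hApq (hAself p)
      set A' : V → V → Prop := fun a b => A a b ∨ (a = p ∧ b = q) with hA'
      have hAA' : ∀ a b, A a b → A' a b := fun a b h => Or.inl h
      have hA'B : ∀ a b, A' a b → B a b := by
        rintro a b (h | ⟨rfl, rfl⟩)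
        · exact hAB a b h
        · exact hBpq
      have hstep : Chain P A A' :=
        chain_single (hP A (fun _ _ h => h) hAB) (hP A' hAA' hA'B)
          (differ_addEdge A p q hpq hApq)
      have hmem : (p, q) ∈ {e : V × V | B e.1 e.2 ∧ ¬ A e.1 e.2} := ⟨hBpq, hApq⟩
      have hsub : {e : V × V | B e.1 e.2 ∧ ¬ A' e.1 e.2}
          ⊂ {e : V × V | B e.1 e.2 ∧ ¬ A e.1 e.2} := by
        constructor
        · rintro ⟨a, b⟩ ⟨h1, h2⟩
          exact ⟨h1, fun h => h2 (Or.inl h)⟩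
        · intro hsub'
          have := hsub' hmem
          exact this.2 (Or.inr ⟨rfl, rfl⟩)
      have hlt : {e : V × V | B e.1 e.2 ∧ ¬ A' e.1 e.2}.ncard < n := by
        rw [← hn]
        exact Set.ncard_lt_ncard hsub (Set.toFinite _)
      have hA'self : ∀ a, A' a a := fun a => Or.inl (hAself a)
      have hP' : ∀ C : V → V → Prop, (∀ a b, A' a b → C a b) → (∀ a b, C a b → B a b) → P C :=
        fun C h1 h2 => hP C (fun a b h => h1 a b (Or.inl h)) h2
      exact chain_trans hstep
        (ih _ hlt A' hA'self hA'B hP' rfl)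

/-- `r` reaches every vertex in `H`. -/
def RootedBy (H : V → V → Prop) (r : V) : Prop := ∀ v, Relation.ReflTransGen H r v

/-- The set of vertices that reach `r`. -/
def rootSet (H : V → V → Prop) (r : V) : Set V := {x | Relation.ReflTransGen H x r}

lemma closed_back {H : V → V → Prop} {S : Set V}
    (hS : ∀ p q, H p q → q ∈ S → p ∈ S) {p q : V}
    (h : Relation.ReflTransGen H p q) (hq : q ∈ S) : p ∈ S := by
  induction h with
  | refl => exact hq
  | tail _ hbc ih => exact ih (hS _ _ hbc hq)

lemma isRootComp_rootSet {H : V → V → Prop} {r : V} (h : RootedBy H r) :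
    IsRootComp H (rootSet H r) := by
  refine ⟨⟨r, Relation.ReflTransGen.refl⟩, ?_, ?_⟩
  · intro u hu v _
    exact Relation.ReflTransGen.trans hu (h v)
  · intro p q hpq hq
    exact Relation.ReflTransGen.head hpq hq

lemma rootComp_eq_rootSet {H : V → V → Prop} {r : V} {S : Set V}
    (h : RootedBy H r) (hS : IsRootComp H S) : S = rootSet H r := by
  obtain ⟨⟨s0, hs0⟩, hconn, hcl⟩ := hS
  have hrS : r ∈ S := closed_back hcl (h s0) hs0
  ext x
  constructor
  · intro hx
    exact hconn x hx r hrS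
  · intro hx
    exact closed_back hcl hx hrS

lemma exists_rootComp_subset [Fintype V] {H : V → V → Prop} :
    ∀ (n : ℕ) (W : Set V), W.ncard = n → W.Nonempty →
      (∀ p q, H p q → q ∈ W → p ∈ W) → ∃ S, S ⊆ W ∧ IsRootComp H S := by
  intro n
  induction n using Nat.strong_induction_on with
  | _ n ih =>
    intro W hcard hne hcl
    by_cases hsc : ∀ u ∈ W, ∀ v ∈ W, Relation.ReflTransGen H u v
    · exact ⟨W, subset_rfl, hne, hsc, hcl⟩
    · push_neg at hsc
      obtain ⟨u, hu, v, hv, huv⟩ := hsc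
      set W' : Set V := {x ∈ W | Relation.ReflTransGen H x v} with hW'
      have hcl' : ∀ p q, H p q → q ∈ W' → p ∈ W' := by
        rintro p q hpq ⟨hqW, hqv⟩
        exact ⟨hcl p q hpq hqW, Relation.ReflTransGen.head hpq hqv⟩
      have hne' : W'.Nonempty := ⟨v, hv, Relation.ReflTransGen.refl⟩
      have hss : W' ⊂ W := by
        constructor
        · exact Set.sep_subset _ _
        · intro hsub
          exact huv (hsub hu).2
      have hlt : W'.ncard < n := by
        rw [← hcard]
        exact Set.ncard_lt_ncard hss (Set.toFinite _)
      obtain ⟨S, hSW', hS⟩ := ih _ hlt W' rfl hne' hcl'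
      exact ⟨S, hSW'.trans (Set.sep_subset _ _), hS⟩

lemma rootedBy_of_unique [Fintype V] {G : V → V → Prop} {R : Set V} {r : V}
    (hR : IsRootComp G R) (hRu : ∀ S : Set V, IsRootComp G S → S = R) (hr : r ∈ R) :
    RootedBy G r := by
  intro v
  obtain ⟨S, hSW, hS⟩ := exists_rootComp_subset _ {x | Relation.ReflTransGen G x v} rfl
    ⟨v, Relation.ReflTransGen.refl⟩ (fun p q hpq hq => Relation.ReflTransGen.head hpq hq)
  have hSR := hRu S hS
  rw [← hSR] at hr
  exact hSW hr

lemma reach_shortcut {C G : V → V → Prop} {r : V}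
    (hsub : ∀ p q, C p q → G p q ∨ p = r) {x : V}
    (h : Relation.ReflTransGen C x r) : Relation.ReflTransGen G x r := by
  induction h using Relation.ReflTransGen.head_induction_on with
  | refl => exact Relation.ReflTransGen.refl
  | head h' _ ih =>
    rcases hsub _ _ h' with hg | rfl
    · exact Relation.ReflTransGen.head hg ih
    · exact Relation.ReflTransGen.refl

lemma star2_reach {C : V → V → Prop} {a b t : V}
    (hsub : ∀ p q, C p q → p = q ∨ p = a ∨ p = b) {x : V}
    (h : Relation.ReflTransGen C x t) : x = t ∨ x = a ∨ x = b := by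
  induction h using Relation.ReflTransGen.head_induction_on with
  | refl => exact Or.inl rfl
  | head h' _ ih =>
    rcases hsub _ _ h' with rfl | rfl | rfl
    · exact ih
    · exact Or.inr (Or.inl rfl)
    · exact Or.inr (Or.inr rfl)

/-- The star graph: all self-loops plus all edges out of `z`. -/
def Star (z : V) : V → V → Prop := fun p q => p = q ∨ p = z

def GSup (H1 H2 : V → V → Prop) : V → V → Prop := fun p q => H1 p q ∨ H2 p q

end IncAux

/-- For `n > 2`: between any two rooted graphs `G`, `G'` (with self-loops, roots
`R`, `R'`) there is a sequence of rooted graphs leading from `G` to `G'`,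
changing one edge at a time, that avoids any prescribed root component
`R'' ∉ {R, R'}`. -/
theorem increment_root_grid {V : Type*} [Fintype V]
    (n : ℕ) (hcard : Fintype.card V = n) (hn : 2 < n)
    (G G' : V → V → Prop) (hGself : ∀ p, G p p) (hG'self : ∀ p, G' p p)
    (R R' : Set V)
    (hR : IsRootComp G R) (hRu : ∀ S : Set V, IsRootComp G S → S = R)
    (hR' : IsRootComp G' R') (hR'u : ∀ S : Set V, IsRootComp G' S → S = R')
    (R'' : Set V) (hne : R'' ≠ R) (hne' : R'' ≠ R') :
    ∃ (k : ℕ) (Gs : ℕ → V → V → Prop),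
      Gs 0 = G ∧ Gs k = G' ∧
      (∀ i ≤ k, (∀ p, Gs i p p) ∧
        ∃ Ri : Set V, IsRootComp (Gs i) Ri ∧
          (∀ S : Set V, IsRootComp (Gs i) S → S = Ri) ∧ Ri ≠ R'') ∧
      (∀ i < k, DifferOneEdge (Gs i) (Gs (i + 1))) := by
  classical
  suffices h : IncAux.Chain (fun H => (∀ p, H p p) ∧
      ∃ Ri : Set V, IsRootComp H Ri ∧ (∀ S : Set V, IsRootComp H S → S = Ri) ∧ Ri ≠ R'')
      G G' by
    obtain ⟨k, Gs, h0, hk, hPs, hd⟩ := h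
    exact ⟨k, Gs, h0, hk, fun i hi => hPs i hi, hd⟩
  set P : (V → V → Prop) → Prop := fun H => (∀ p, H p p) ∧
    ∃ Ri : Set V, IsRootComp H Ri ∧ (∀ S : Set V, IsRootComp H S → S = Ri) ∧ Ri ≠ R''
    with hPdef
  -- a helper to establish `P`
  have goodOf : ∀ (C : V → V → Prop) (z : V), (∀ p, C p p) → IncAux.RootedBy C z →
      IncAux.rootSet C z ≠ R'' → P C := by
    intro C z h1 h2 h3
    exact ⟨h1, IncAux.rootSet C z, IncAux.isRootComp_rootSet h2,
      fun S hS => IncAux.rootComp_eq_rootSet h2 hS, h3⟩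
  -- choose a good vertex inside a root
  have choice : ∀ (S : Set V), S.Nonempty → R'' ≠ S →
      ∃ r ∈ S, ∀ T : Set V, r ∈ T → T ⊆ S → T ≠ R'' := by
    intro S hSne hneS
    by_cases h : ∃ r ∈ S, r ∉ R''
    · obtain ⟨r, hr, hr2⟩ := h
      exact ⟨r, hr, fun T h1 h2 hT => hr2 (hT ▸ h1)⟩
    · push_neg at h
      obtain ⟨r, hr⟩ := hSne
      refine ⟨r, hr, fun T h1 h2 hT => ?_⟩
      subst hT
      exact hneS (Set.Subset.antisymm h2 h)
  obtain ⟨r, hrR, hrP⟩ := choice R hR.1 hne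
  obtain ⟨r', hr'R, hr'P⟩ := choice R' hR'.1 hne'
  -- a third-vertex fact
  have hV3 : ∀ a b : V, ∃ c : V, c ≠ a ∧ c ≠ b := by
    intro a b
    have h2 : ({a, b} : Finset V).card ≤ 2 :=
      (Finset.card_insert_le a {b}).trans (by simp)
    have hpos : 0 < (Finset.univ \ {a, b}).card := by
      rw [Finset.card_sdiff_of_subset (Finset.subset_univ _), Finset.card_univ]
      omega
    obtain ⟨c, hc⟩ := Finset.card_pos.mp hpos
    rw [Finset.mem_sdiff] at hc
    refine ⟨c, ?_, ?_⟩ <;> rintro rfl <;> simp at hc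
  -- choose `s`
  have hsch : ∃ s : V, ∀ (a : V) (T : Set V), s ∈ T → T ⊆ {a, s} → T ≠ R'' := by
    by_cases hu : R'' = Set.univ
    · have hne0 : Nonempty V := Fintype.card_pos_iff.mp (by omega)
      obtain ⟨s⟩ := hne0
      refine ⟨s, fun a T hsT hT hTR => ?_⟩
      obtain ⟨c, hc1, hc2⟩ := hV3 a s
      have hcT : c ∈ T := by rw [hTR, hu]; exact Set.mem_univ c
      rcases hT hcT with h | h
      · exact hc1 h
      · exact hc2 h
    · obtain ⟨s, hs⟩ : ∃ s, s ∉ R'' := by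
        by_contra h
        push_neg at h
        exact hu (Set.eq_univ_iff_forall.mpr h)
      exact ⟨s, fun a T hsT hT hTR => hs (hTR ▸ hsT)⟩
  obtain ⟨s, hsP⟩ := hsch
  have hsingr : ({r} : Set V) ≠ R'' :=
    hrP {r} rfl (Set.singleton_subset_iff.mpr hrR)
  have hsingr' : ({r'} : Set V) ≠ R'' :=
    hr'P {r'} rfl (Set.singleton_subset_iff.mpr hr'R)
  -- rootedness facts
  have hGr : IncAux.RootedBy G r := IncAux.rootedBy_of_unique hR hRu hrR
  have hG'r' : IncAux.RootedBy G' r' := IncAux.rootedBy_of_unique hR' hR'u hr'R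
  -- good lemma for graphs between `H` and `H ⊔ Star z` (H rooted, z in its root)
  have goodG : ∀ (H : V → V → Prop) (R0 : Set V) (z : V), (∀ p, H p p) →
      IsRootComp H R0 → (∀ S : Set V, IsRootComp H S → S = R0) → z ∈ R0 →
      (∀ T : Set V, z ∈ T → T ⊆ R0 → T ≠ R'') →
      ∀ C : V → V → Prop, (∀ p, C p p) → IncAux.RootedBy C z →
        (∀ p q, C p q → IncAux.GSup H (IncAux.Star z) p q) → P C := by
    intro H R0 z hHself hR0 hR0u hzR0 hzP C hCself hCz hCsub
    refine goodOf C z hCself hCz ?_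
    refine hzP _ Relation.ReflTransGen.refl ?_
    intro x hx
    have hsub : ∀ p q, C p q → H p q ∨ p = z := by
      intro p q h
      rcases hCsub p q h with h | (h | h)
      · exact Or.inl h
      · exact Or.inl (h ▸ hHself p)
      · exact Or.inr h
    have hreach : Relation.ReflTransGen H x z := IncAux.reach_shortcut hsub hx
    have hmem : x ∈ IncAux.rootSet H z := hreach
    rwa [← IncAux.rootComp_eq_rootSet (IncAux.rootedBy_of_unique hR0 hR0u hzR0) hR0] at hmem
  -- good lemma for star-intermediates rooted by `z`, other star center `s`
  have goodS1 : ∀ z : V, ({z} : Set V) ≠ R'' →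
      ∀ C : V → V → Prop, (∀ p, C p p) → IncAux.RootedBy C z →
        (∀ p q, C p q → p = q ∨ p = z ∨ p = s) → P C := by
    intro z hz C hCself hCz hCsub
    refine goodOf C z hCself hCz ?_
    set T := IncAux.rootSet C z with hT
    have hzT : z ∈ T := Relation.ReflTransGen.refl
    have hTsub : ∀ x ∈ T, x = z ∨ x = s := by
      intro x hx
      rcases IncAux.star2_reach hCsub hx with h | h | h
      · exact Or.inl h
      · exact Or.inl h
      · exact Or.inr h
    by_cases hsT : s ∈ T
    · refine hsP z T hsT ?_
      intro x hx
      rcases hTsub x hx with rfl | rfl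
      · exact Set.mem_insert _ _
      · exact Set.mem_insert_of_mem _ rfl
    · have hTz : T = {z} := by
        apply Set.Subset.antisymm
        · intro x hx
          rcases hTsub x hx with rfl | rfl
          · rfl
          · exact absurd hx hsT
        · exact Set.singleton_subset_iff.mpr hzT
      rw [hTz]
      exact hz
  -- good lemma for star-intermediates rooted by `s`, other star center `a`
  have goodS2 : ∀ a : V,
      ∀ C : V → V → Prop, (∀ p, C p p) → IncAux.RootedBy C s →
        (∀ p q, C p q → p = q ∨ p = s ∨ p = a) → P C := by
    intro a C hCself hCs hCsub
    refine goodOf C s hCself hCs ?_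
    refine hsP a _ Relation.ReflTransGen.refl ?_
    intro x hx
    rcases IncAux.star2_reach hCsub hx with rfl | rfl | rfl
    · exact Set.mem_insert_of_mem _ rfl
    · exact Set.mem_insert_of_mem _ rfl
    · exact Set.mem_insert _ _
  -- the eight chains
  have c1 : IncAux.Chain P G (IncAux.GSup G (IncAux.Star r)) := by
    refine IncAux.chain_mono P _ (fun p => Or.inl (hGself p)) _ G hGself
      (fun p q h => Or.inl h) ?_ rfl
    intro C h1 h2
    exact goodG G R r hGself hR hRu hrR hrP C (fun p => h1 p p (hGself p))
      (fun v => Relation.ReflTransGen.mono (fun a b h => h1 a b h) _ _ (hGr v)) h2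
  have c2 : IncAux.Chain P (IncAux.Star r) (IncAux.GSup G (IncAux.Star r)) := by
    refine IncAux.chain_mono P _ (fun p => Or.inl (hGself p)) _ (IncAux.Star r)
      (fun p => Or.inl rfl) (fun p q h => Or.inr h) ?_ rfl
    intro C h1 h2
    exact goodG G R r hGself hR hRu hrR hrP C (fun p => h1 p p (Or.inl rfl))
      (fun v => Relation.ReflTransGen.single (h1 r v (Or.inr rfl))) h2
  have c3 : IncAux.Chain P (IncAux.Star r) (IncAux.GSup (IncAux.Star r) (IncAux.Star s)) := by
    refine IncAux.chain_mono P _ (fun p => Or.inl (Or.inl rfl)) _ (IncAux.Star r)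
      (fun p => Or.inl rfl) (fun p q h => Or.inl h) ?_ rfl
    intro C h1 h2
    refine goodS1 r hsingr C (fun p => h1 p p (Or.inl rfl))
      (fun v => Relation.ReflTransGen.single (h1 r v (Or.inr rfl))) ?_
    intro p q h
    rcases h2 p q h with (h | h) | (h | h)
    · exact Or.inl h
    · exact Or.inr (Or.inl h)
    · exact Or.inl h
    · exact Or.inr (Or.inr h)
  have c4 : IncAux.Chain P (IncAux.Star s) (IncAux.GSup (IncAux.Star r) (IncAux.Star s)) := by
    refine IncAux.chain_mono P _ (fun p => Or.inl (Or.inl rfl)) _ (IncAux.Star s)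
      (fun p => Or.inl rfl) (fun p q h => Or.inr h) ?_ rfl
    intro C h1 h2
    refine goodS2 r C (fun p => h1 p p (Or.inl rfl))
      (fun v => Relation.ReflTransGen.single (h1 s v (Or.inr rfl))) ?_
    intro p q h
    rcases h2 p q h with (h | h) | (h | h)
    · exact Or.inl h
    · exact Or.inr (Or.inr h)
    · exact Or.inl h
    · exact Or.inr (Or.inl h)
  have c5 : IncAux.Chain P (IncAux.Star s) (IncAux.GSup (IncAux.Star s) (IncAux.Star r')) := by
    refine IncAux.chain_mono P _ (fun p => Or.inl (Or.inl rfl)) _ (IncAux.Star s)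
      (fun p => Or.inl rfl) (fun p q h => Or.inl h) ?_ rfl
    intro C h1 h2
    refine goodS2 r' C (fun p => h1 p p (Or.inl rfl))
      (fun v => Relation.ReflTransGen.single (h1 s v (Or.inr rfl))) ?_
    intro p q h
    rcases h2 p q h with (h | h) | (h | h)
    · exact Or.inl h
    · exact Or.inr (Or.inl h)
    · exact Or.inl h
    · exact Or.inr (Or.inr h)
  have c6 : IncAux.Chain P (IncAux.Star r') (IncAux.GSup (IncAux.Star s) (IncAux.Star r')) := by
    refine IncAux.chain_mono P _ (fun p => Or.inl (Or.inl rfl)) _ (IncAux.Star r')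
      (fun p => Or.inl rfl) (fun p q h => Or.inr h) ?_ rfl
    intro C h1 h2
    refine goodS1 r' hsingr' C (fun p => h1 p p (Or.inl rfl))
      (fun v => Relation.ReflTransGen.single (h1 r' v (Or.inr rfl))) ?_
    intro p q h
    rcases h2 p q h with (h | h) | (h | h)
    · exact Or.inl h
    · exact Or.inr (Or.inr h)
    · exact Or.inl h
    · exact Or.inr (Or.inl h)
  have c7 : IncAux.Chain P (IncAux.Star r') (IncAux.GSup G' (IncAux.Star r')) := by
    refine IncAux.chain_mono P _ (fun p => Or.inl (hG'self p)) _ (IncAux.Star r')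
      (fun p => Or.inl rfl) (fun p q h => Or.inr h) ?_ rfl
    intro C h1 h2
    exact goodG G' R' r' hG'self hR' hR'u hr'R hr'P C (fun p => h1 p p (Or.inl rfl))
      (fun v => Relation.ReflTransGen.single (h1 r' v (Or.inr rfl))) h2
  have c8 : IncAux.Chain P G' (IncAux.GSup G' (IncAux.Star r')) := by
    refine IncAux.chain_mono P _ (fun p => Or.inl (hG'self p)) _ G' hG'self
      (fun p q h => Or.inl h) ?_ rfl
    intro C h1 h2
    exact goodG G' R' r' hG'self hR' hR'u hr'R hr'P C (fun p => h1 p p (hG'self p))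
      (fun v => Relation.ReflTransGen.mono (fun a b h => h1 a b h) _ _ (hG'r' v)) h2
  exact IncAux.chain_trans c1 (IncAux.chain_trans (IncAux.chain_symm c2)
    (IncAux.chain_trans c3 (IncAux.chain_trans (IncAux.chain_symm c4)
    (IncAux.chain_trans c5 (IncAux.chain_trans (IncAux.chain_symm c6)
    (IncAux.chain_trans c7 (IncAux.chain_symm c8)))))))
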